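/- (Legendre relation) For all k ∈ (0,1), with k′ = √(1−k²), one has E(k)K(k′) + E(k′)K(k) − K(k)K(k′) = π/2, where K and E are the complete elliptic integrals of the first and second kind. -/

import Mathlib

open Real

/-- The complete elliptic integral of the first kind. -/
noncomputable def ellipticK (k : ℝ) : ℝ :=
  ∫ t in (0:ℝ)..1, 1 / Real.sqrt ((1 - t ^ 2) * (1 - k ^ 2 * t ^ 2))

/-- The complete elliptic integral of the second kind. -/
noncomputable def ellipticE (k : ℝ) : ℝ :=
  ∫ t in (0:ℝ)..1, Real.sqrt ((1 - k ^ 2 * t ^ 2) / (1 - t ^ 2))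

/-- The ratio of elliptic integrals with complementary modulus. -/
noncomputable def xRatio (k : ℝ) : ℝ :=
  ellipticK (Real.sqrt (1 - k ^ 2)) / ellipticK k

namespace LegendreAux

open MeasureTheory intervalIntegral Set Filter

/-- integrand of K -/
noncomputable def Ku (k t : ℝ) : ℝ := 1 / Real.sqrt ((1 - t ^ 2) * (1 - k ^ 2 * t ^ 2))
/-- integrand of E -/
noncomputable def Eu (k t : ℝ) : ℝ := Real.sqrt ((1 - k ^ 2 * t ^ 2) / (1 - t ^ 2))
/-- integrand appearing in dE/dk -/
noncomputable def Hu (k t : ℝ) : ℝ :=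
  t ^ 2 / (Real.sqrt (1 - t ^ 2) * Real.sqrt (1 - k ^ 2 * t ^ 2))
/-- integrand appearing in dK/dk -/
noncomputable def H3 (k t : ℝ) : ℝ :=
  t ^ 2 / (Real.sqrt (1 - t ^ 2) * Real.sqrt (1 - k ^ 2 * t ^ 2) ^ 3)
/-- exact-derivative integrand -/
noncomputable def Fd (k t : ℝ) : ℝ :=
  (1 - 2 * t ^ 2 + k ^ 2 * t ^ 4) / (Real.sqrt (1 - t ^ 2) * Real.sqrt (1 - k ^ 2 * t ^ 2) ^ 3)

lemma ellipticK_eq (k : ℝ) : ellipticK k = ∫ t in (0:ℝ)..1, Ku k t := rfl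
lemma ellipticE_eq (k : ℝ) : ellipticE k = ∫ t in (0:ℝ)..1, Eu k t := rfl

/-- `(1-t)^r` is interval integrable on `[0,1]` for `r > -1`. -/
lemma integrable_one_sub_rpow {r : ℝ} (hr : -1 < r) :
    IntervalIntegrable (fun t : ℝ => (1 - t) ^ r) volume 0 1 := by
  have h := (intervalIntegrable_rpow' (r := r) hr (a := 0) (b := 1)).comp_sub_left 1
  simpa using h.symm

lemma integral_one_sub_rpow {r : ℝ} (hr : -1 < r) (hr0 : r ≠ 0) :
    ∫ t in (0:ℝ)..1, (1 - t) ^ r = 1 / (r + 1) := by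
  have h := intervalIntegral.integral_comp_sub_left (a := 0) (b := 1)
    (fun x : ℝ => x ^ r) 1
  rw [h]
  norm_num
  rw [integral_rpow (Or.inl hr)]
  rw [Real.one_rpow, Real.zero_rpow (by intro h; apply hr0; linarith)]
  ring

/-- master integrability lemma via comparison with `(1-t)^r`. -/
lemma integrable_of_bound (f : ℝ → ℝ) (c r : ℝ) (hr : -1 < r)
    (hm : AEStronglyMeasurable f (volume.restrict (Set.uIoc (0:ℝ) 1)))
    (h : ∀ t ∈ Ioo (0:ℝ) 1, |f t| ≤ c * (1 - t) ^ r) :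
    IntervalIntegrable f volume 0 1 := by
  apply IntervalIntegrable.mono_fun' ((integrable_one_sub_rpow hr).const_mul c) hm
  have h1 : ∀ᵐ t : ℝ ∂volume, t ≠ (1:ℝ) := by
    rw [MeasureTheory.ae_iff]
    have : {a : ℝ | ¬a ≠ 1} = {1} := by ext t; simp
    rw [this]; exact Real.volume_singleton
  rw [Filter.EventuallyLE, MeasureTheory.ae_restrict_iff' measurableSet_uIoc]
  filter_upwards [h1] with t ht1 htm
  rw [Set.uIoc_of_le (by norm_num : (0:ℝ) ≤ 1)] at htm
  have : t ∈ Ioo (0:ℝ) 1 := ⟨htm.1, lt_of_le_of_ne htm.2 ht1⟩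
  simpa using h t this

lemma sqrt_one_sub_sq_ge (t : ℝ) (ht : t ∈ Icc (0:ℝ) 1) :
    Real.sqrt (1 - t) ≤ Real.sqrt (1 - t ^ 2) := by
  apply Real.sqrt_le_sqrt; nlinarith [ht.1, ht.2]

lemma rpow_neg_half {x : ℝ} (hx : 0 ≤ x) : x ^ (-(1/2) : ℝ) = 1 / Real.sqrt x := by
  rw [Real.rpow_neg hx, Real.sqrt_eq_rpow]
  exact (one_div _).symm

lemma sqrt_sqrt_cube {x : ℝ} (hx : 0 ≤ x) : Real.sqrt (Real.sqrt x ^ 3) = x ^ ((3:ℝ)/4) := by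
  rw [show Real.sqrt x ^ 3 = (Real.sqrt x) ^ ((3:ℕ):ℝ) by rw [Real.rpow_natCast],
      Real.sqrt_eq_rpow x, ← Real.rpow_mul hx, Real.sqrt_eq_rpow, ← Real.rpow_mul (by positivity)]
  norm_num

lemma rpow_neg_3q {x : ℝ} (hx : 0 ≤ x) :
    x ^ (-(3/4) : ℝ) = 1 / Real.sqrt (Real.sqrt x ^ 3) := by
  rw [sqrt_sqrt_cube hx, Real.rpow_neg hx]
  exact (one_div _).symm

lemma one_div_sqrt_le {x y : ℝ} (hy : 0 < y) (h : y ≤ x) :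
    1 / Real.sqrt x ≤ 1 / Real.sqrt y :=
  one_div_le_one_div_of_le (Real.sqrt_pos.2 hy) (Real.sqrt_le_sqrt h)

section bounds

variable {k t : ℝ}

lemma pos_a (ht : t ∈ Set.Ioo (0:ℝ) 1) : 0 < 1 - t ^ 2 := by
  nlinarith [ht.1, ht.2]

lemma pos_b (hk2 : k ^ 2 < 1) (ht : t ∈ Set.Ioo (0:ℝ) 1) : 0 < 1 - k ^ 2 * t ^ 2 := by
  nlinarith [ht.1, ht.2, sq_nonneg k]

lemma meas_Ku : AEStronglyMeasurable (Ku k) (volume.restrict (Set.uIoc (0:ℝ) 1)) := by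
  refine Measurable.aestronglyMeasurable ?_
  unfold Ku; fun_prop

lemma meas_Eu : AEStronglyMeasurable (Eu k) (volume.restrict (Set.uIoc (0:ℝ) 1)) := by
  refine Measurable.aestronglyMeasurable ?_
  unfold Eu; fun_prop

lemma meas_Hu : AEStronglyMeasurable (Hu k) (volume.restrict (Set.uIoc (0:ℝ) 1)) := by
  refine Measurable.aestronglyMeasurable ?_
  unfold Hu; fun_prop

lemma meas_H3 : AEStronglyMeasurable (H3 k) (volume.restrict (Set.uIoc (0:ℝ) 1)) := by
  refine Measurable.aestronglyMeasurable ?_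
  unfold H3; fun_prop

lemma meas_Fd : AEStronglyMeasurable (Fd k) (volume.restrict (Set.uIoc (0:ℝ) 1)) := by
  refine Measurable.aestronglyMeasurable ?_
  unfold Fd; fun_prop

lemma prod_ge (hk2 : k ^ 2 < 1) (ht : t ∈ Set.Ioo (0:ℝ) 1) :
    (1 - k ^ 2) * (1 - t) ≤ (1 - t ^ 2) * (1 - k ^ 2 * t ^ 2) := by
  have h1 : 1 - t ≤ 1 - t ^ 2 := by nlinarith [ht.1, ht.2]
  have h2 : 1 - k ^ 2 ≤ 1 - k ^ 2 * t ^ 2 := by nlinarith [ht.1, ht.2, sq_nonneg k]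
  have h3 : (0:ℝ) ≤ 1 - t := by linarith [ht.2]
  calc (1 - k ^ 2) * (1 - t) ≤ (1 - k ^ 2 * t ^ 2) * (1 - t ^ 2) :=
        mul_le_mul h2 h1 h3 (le_of_lt (pos_b hk2 ht))
    _ = (1 - t ^ 2) * (1 - k ^ 2 * t ^ 2) := by ring

lemma bound_Ku (hk2 : k ^ 2 < 1) (ht : t ∈ Set.Ioo (0:ℝ) 1) :
    |Ku k t| ≤ (1 / Real.sqrt (1 - k ^ 2)) * (1 - t) ^ (-(1/2) : ℝ) := by
  have ha := pos_a ht
  have hb := pos_b hk2 ht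
  have h1t : (0:ℝ) ≤ 1 - t := by linarith [ht.2]
  rw [rpow_neg_half h1t]
  unfold Ku
  rw [abs_of_nonneg (by positivity), div_mul_div_comm, one_mul,
    ← Real.sqrt_mul (by linarith : (0:ℝ) ≤ 1 - k ^ 2)]
  exact one_div_sqrt_le (mul_pos (by linarith) (by linarith [ht.2])) (prod_ge hk2 ht)

lemma bound_Eu (hk2 : k ^ 2 < 1) (ht : t ∈ Set.Ioo (0:ℝ) 1) :
    |Eu k t| ≤ 1 * (1 - t) ^ (-(1/2) : ℝ) := by
  have ha := pos_a ht
  have hb := pos_b hk2 ht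
  have h1t : (0:ℝ) ≤ 1 - t := by linarith [ht.2]
  rw [rpow_neg_half h1t, one_mul]
  unfold Eu
  rw [abs_of_nonneg (Real.sqrt_nonneg _), Real.sqrt_div' _ (le_of_lt ha)]
  apply div_le_div₀ (by positivity) ?_ (Real.sqrt_pos.2 (by linarith [ht.2])) ?_
  · exact Real.sqrt_le_one.mpr (by nlinarith [ht.1, ht.2, sq_nonneg k, sq_nonneg (k*t)])
  · exact Real.sqrt_le_sqrt (by nlinarith [ht.1, ht.2])

lemma bound_Hu (hk2 : k ^ 2 < 1) (ht : t ∈ Set.Ioo (0:ℝ) 1) :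
    |Hu k t| ≤ (1 / Real.sqrt (1 - k ^ 2)) * (1 - t) ^ (-(1/2) : ℝ) := by
  have h := bound_Ku hk2 ht
  refine le_trans ?_ h
  have ha := pos_a ht
  have hb := pos_b hk2 ht
  have ht2 : t ^ 2 ≤ 1 := by nlinarith [ht.1, ht.2]
  unfold Hu Ku
  rw [abs_of_nonneg (by positivity), abs_of_nonneg (by positivity),
    ← Real.sqrt_mul (le_of_lt ha)]
  exact div_le_div₀ (by positivity) ht2 (Real.sqrt_pos.2 (mul_pos ha hb)) le_rfl

lemma bound_H3 (hk2 : k ^ 2 < 1) (ht : t ∈ Set.Ioo (0:ℝ) 1) :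
    |H3 k t| ≤ (1 / (1 - k ^ 2) ^ 2) * (1 - t) ^ (-(1/2) : ℝ) := by
  have ha := pos_a ht
  have hb := pos_b hk2 ht
  have hk0 : (0:ℝ) < 1 - k ^ 2 := by linarith
  have h1t : (0:ℝ) ≤ 1 - t := by linarith [ht.2]
  have ht2 : t ^ 2 ≤ 1 := by nlinarith [ht.1, ht.2]
  rw [rpow_neg_half h1t]
  unfold H3
  rw [abs_of_nonneg (by positivity), div_mul_div_comm, one_mul]
  apply div_le_div₀ (by norm_num) ht2
    (mul_pos (pow_pos hk0 2) (Real.sqrt_pos.2 (by linarith [ht.2] : (0:ℝ) < 1 - t)))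
  -- (1-k^2)^2 * sqrt(1-t) ≤ sqrt(1-t^2) * sqrt(1-k^2 t^2)^3
  have e1 : Real.sqrt (1 - t) ≤ Real.sqrt (1 - t ^ 2) :=
    Real.sqrt_le_sqrt (by nlinarith [ht.1, ht.2])
  have e2 : 1 - k ^ 2 ≤ Real.sqrt (1 - k ^ 2 * t ^ 2) ^ 2 := by
    rw [Real.sq_sqrt (le_of_lt hb)]; nlinarith [ht.1, ht.2, sq_nonneg k]
  have e3 : (1 - k ^ 2) ^ 2 ≤ Real.sqrt (1 - k ^ 2 * t ^ 2) ^ 3 := by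
    have hs : 0 ≤ Real.sqrt (1 - k ^ 2 * t ^ 2) := Real.sqrt_nonneg _
    have hs1 : Real.sqrt (1 - k ^ 2 * t ^ 2) ≤ 1 :=
      Real.sqrt_le_one.mpr (by nlinarith [ht.1, ht.2, sq_nonneg k, sq_nonneg (k*t)])
    have h4 : (1 - k ^ 2) ^ 2 ≤ Real.sqrt (1 - k ^ 2 * t ^ 2) ^ 4 := by nlinarith [e2, hk0]
    have h5 : Real.sqrt (1 - k ^ 2 * t ^ 2) ^ 4 ≤ Real.sqrt (1 - k ^ 2 * t ^ 2) ^ 3 := by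
      nlinarith [mul_le_mul_of_nonneg_left hs1 (pow_nonneg hs 3)]
    linarith
  calc (1 - k ^ 2) ^ 2 * Real.sqrt (1 - t)
      ≤ Real.sqrt (1 - k ^ 2 * t ^ 2) ^ 3 * Real.sqrt (1 - t ^ 2) :=
        mul_le_mul e3 e1 (Real.sqrt_nonneg _) (by positivity)
    _ = Real.sqrt (1 - t ^ 2) * Real.sqrt (1 - k ^ 2 * t ^ 2) ^ 3 := by ring

lemma bound_Fd (hk2 : k ^ 2 < 1) (ht : t ∈ Set.Ioo (0:ℝ) 1) :
    |Fd k t| ≤ (4 / (1 - k ^ 2) ^ 2) * (1 - t) ^ (-(1/2) : ℝ) := by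
  have ha := pos_a ht
  have hb := pos_b hk2 ht
  have hk0 : (0:ℝ) < 1 - k ^ 2 := by linarith
  have h1t : (0:ℝ) ≤ 1 - t := by linarith [ht.2]
  have ht2 : t ^ 2 ≤ 1 := by nlinarith [ht.1, ht.2]
  have hH := bound_H3 hk2 ht
  have hnum : |1 - 2 * t ^ 2 + k ^ 2 * t ^ 4| ≤ 4 := by
    rw [abs_le]; constructor <;> nlinarith [ht.1, ht.2, sq_nonneg k, sq_nonneg (t^2), sq_nonneg (k*t^2)]
  have hden : (0:ℝ) < Real.sqrt (1 - t ^ 2) * Real.sqrt (1 - k ^ 2 * t ^ 2) ^ 3 :=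
    mul_pos (Real.sqrt_pos.2 ha) (pow_pos (Real.sqrt_pos.2 hb) 3)
  unfold Fd
  rw [abs_div, abs_of_pos hden]
  rw [rpow_neg_half h1t]
  have e1 : Real.sqrt (1 - t) ≤ Real.sqrt (1 - t ^ 2) :=
    Real.sqrt_le_sqrt (by nlinarith [ht.1, ht.2])
  have e2 : 1 - k ^ 2 ≤ Real.sqrt (1 - k ^ 2 * t ^ 2) ^ 2 := by
    rw [Real.sq_sqrt (le_of_lt hb)]; nlinarith [ht.1, ht.2, sq_nonneg k]
  have e3 : (1 - k ^ 2) ^ 2 ≤ Real.sqrt (1 - k ^ 2 * t ^ 2) ^ 3 := by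
    have hs : 0 ≤ Real.sqrt (1 - k ^ 2 * t ^ 2) := Real.sqrt_nonneg _
    have hs1 : Real.sqrt (1 - k ^ 2 * t ^ 2) ≤ 1 :=
      Real.sqrt_le_one.mpr (by nlinarith [ht.1, ht.2, sq_nonneg k, sq_nonneg (k*t)])
    have h4 : (1 - k ^ 2) ^ 2 ≤ Real.sqrt (1 - k ^ 2 * t ^ 2) ^ 4 := by nlinarith [e2, hk0]
    have h5 : Real.sqrt (1 - k ^ 2 * t ^ 2) ^ 4 ≤ Real.sqrt (1 - k ^ 2 * t ^ 2) ^ 3 := by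
      nlinarith [mul_le_mul_of_nonneg_left hs1 (pow_nonneg hs 3)]
    linarith
  rw [div_mul_div_comm, mul_one]
  apply div_le_div₀ (by norm_num) hnum
    (mul_pos (pow_pos hk0 2) (Real.sqrt_pos.2 (by linarith [ht.2] : (0:ℝ) < 1 - t)))
  calc (1 - k ^ 2) ^ 2 * Real.sqrt (1 - t)
      ≤ Real.sqrt (1 - k ^ 2 * t ^ 2) ^ 3 * Real.sqrt (1 - t ^ 2) :=
        mul_le_mul e3 e1 (Real.sqrt_nonneg _) (by positivity)
    _ = Real.sqrt (1 - t ^ 2) * Real.sqrt (1 - k ^ 2 * t ^ 2) ^ 3 := by ring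

lemma intKu (hk2 : k ^ 2 < 1) : IntervalIntegrable (Ku k) volume 0 1 :=
  integrable_of_bound _ _ _ (by norm_num) meas_Ku (fun t ht => bound_Ku hk2 ht)

lemma intEu (hk2 : k ^ 2 < 1) : IntervalIntegrable (Eu k) volume 0 1 :=
  integrable_of_bound _ _ _ (by norm_num) meas_Eu (fun t ht => bound_Eu hk2 ht)

lemma intHu (hk2 : k ^ 2 < 1) : IntervalIntegrable (Hu k) volume 0 1 :=
  integrable_of_bound _ _ _ (by norm_num) meas_Hu (fun t ht => bound_Hu hk2 ht)

lemma intH3 (hk2 : k ^ 2 < 1) : IntervalIntegrable (H3 k) volume 0 1 :=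
  integrable_of_bound _ _ _ (by norm_num) meas_H3 (fun t ht => bound_H3 hk2 ht)

lemma intFd (hk2 : k ^ 2 < 1) : IntervalIntegrable (Fd k) volume 0 1 :=
  integrable_of_bound _ _ _ (by norm_num) meas_Fd (fun t ht => bound_Fd hk2 ht)

end bounds

section ftc

variable {k : ℝ}

/-- the integral of the exact derivative `Fd` vanishes -/
lemma integral_Fd (hk2 : k ^ 2 < 1) : ∫ t in (0:ℝ)..1, Fd k t = 0 := by
  set F : ℝ → ℝ := fun t => t * Real.sqrt (1 - t ^ 2) / Real.sqrt (1 - k ^ 2 * t ^ 2) with hF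
  have hbpos : ∀ t ∈ Icc (0:ℝ) 1, 0 < 1 - k ^ 2 * t ^ 2 := by
    intro t ht
    have : t ^ 2 ≤ 1 := by nlinarith [ht.1, ht.2]
    nlinarith [sq_nonneg k, sq_nonneg t]
  have hcont : ContinuousOn F (Icc 0 1) := by
    apply ContinuousOn.div
    · exact (continuous_id.mul (Real.continuous_sqrt.comp (by continuity))).continuousOn
    · exact (Real.continuous_sqrt.comp (by continuity)).continuousOn
    · intro t ht
      exact ne_of_gt (Real.sqrt_pos.2 (hbpos t ht))
  have hderiv : ∀ x ∈ Ioo (0:ℝ) 1, HasDerivWithinAt F (Fd k x) (Ioi x) x := by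
    intro x hx
    have ha := pos_a hx
    have hb := pos_b hk2 hx
    have sa : (0:ℝ) < Real.sqrt (1 - x ^ 2) := Real.sqrt_pos.2 ha
    have sb : (0:ℝ) < Real.sqrt (1 - k ^ 2 * x ^ 2) := Real.sqrt_pos.2 hb
    have h1 : HasDerivAt (fun t : ℝ => 1 - t ^ 2) (-(2 * x)) x := by
      simpa using ((hasDerivAt_pow 2 x).const_sub 1)
    have h2 := h1.sqrt (ne_of_gt ha)
    have h3 : HasDerivAt (fun t : ℝ => 1 - k ^ 2 * t ^ 2) (-(k ^ 2 * (2 * x))) x := by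
      simpa [mul_comm, mul_assoc] using (((hasDerivAt_pow 2 x).const_mul (k ^ 2)).const_sub 1)
    have h4 := h3.sqrt (ne_of_gt hb)
    have h5 : HasDerivAt (fun t : ℝ => t * Real.sqrt (1 - t ^ 2))
        (1 * Real.sqrt (1 - x ^ 2) + x * (-(2 * x) / (2 * Real.sqrt (1 - x ^ 2)))) x :=
      (hasDerivAt_id x).mul h2
    have h6 := h5.div h4 (ne_of_gt sb)
    refine HasDerivAt.hasDerivWithinAt ?_
    refine h6.congr_deriv (Eq.symm ?_)
    have hA : Real.sqrt (1 - x ^ 2) ^ 2 = 1 - x ^ 2 := Real.sq_sqrt (le_of_lt ha)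
    have hB : Real.sqrt (1 - k ^ 2 * x ^ 2) ^ 2 = 1 - k ^ 2 * x ^ 2 := Real.sq_sqrt (le_of_lt hb)
    set A := Real.sqrt (1 - x ^ 2) with hAdef
    set B := Real.sqrt (1 - k ^ 2 * x ^ 2) with hBdef
    unfold Fd
    have key : 1 - 2 * x ^ 2 + k ^ 2 * x ^ 4 = A ^ 2 - x ^ 2 * B ^ 2 := by
      rw [hA, hB]; ring
    have rhs : ((1 * A + x * (-(2 * x) / (2 * A))) * B - x * A * (-(k ^ 2 * (2 * x)) / (2 * B))) / B ^ 2
        = ((A ^ 2 - x ^ 2) * B ^ 2 + k ^ 2 * x ^ 2 * A ^ 2) / (A * B ^ 3) := by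
      field_simp
      ring
    have num : A ^ 2 - x ^ 2 * B ^ 2 = (A ^ 2 - x ^ 2) * B ^ 2 + k ^ 2 * x ^ 2 * A ^ 2 := by
      rw [hA, hB]; ring
    rw [key, rhs, num]
  have := intervalIntegral.integral_eq_sub_of_hasDeriv_right_of_le (by norm_num : (0:ℝ) ≤ 1)
    hcont hderiv (intFd hk2)
  rw [this, hF]
  norm_num

/-- `∫ 1/√(1-t²) = π/2` -/
lemma integral_Ku_zero : ∫ t in (0:ℝ)..1, Ku 0 t = π / 2 := by
  have hderiv : ∀ x ∈ Ioo (0:ℝ) 1, HasDerivWithinAt Real.arcsin (Ku 0 x) (Ioi x) x := by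
    intro x hx
    refine HasDerivAt.hasDerivWithinAt ?_
    have h := Real.hasDerivAt_arcsin (by linarith [hx.1] : x ≠ -1) (ne_of_lt hx.2)
    refine h.congr_deriv (Eq.symm ?_)
    unfold Ku
    norm_num
  have := intervalIntegral.integral_eq_sub_of_hasDeriv_right_of_le (by norm_num : (0:ℝ) ≤ 1)
    Real.continuous_arcsin.continuousOn hderiv (intKu (by norm_num))
  rw [this, Real.arcsin_one, Real.arcsin_zero, sub_zero]

end ftc

lemma ae_ne_one : ∀ᵐ t : ℝ ∂volume, t ≠ (1:ℝ) := by
  rw [MeasureTheory.ae_iff]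
  have : {a : ℝ | ¬a ≠ 1} = {1} := by ext t; simp
  rw [this]; exact Real.volume_singleton

section pointwise

variable {k t : ℝ}

/-- `Eu - Ku = -k² Hu` pointwise -/
lemma EK_identity (hk2 : k ^ 2 < 1) (ht : t ∈ Set.Icc (0:ℝ) 1) :
    Eu k t - Ku k t = -(k ^ 2) * Hu k t := by
  rcases eq_or_lt_of_le ht.2 with h1 | h1
  · unfold Eu Ku Hu; rw [h1]; norm_num
  · have ht' : t ∈ Set.Ioo (-1:ℝ) 1 := ⟨by linarith [ht.1], h1⟩
    have ha : (0:ℝ) < 1 - t ^ 2 := by nlinarith [ht.1, h1]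
    have hb : (0:ℝ) < 1 - k ^ 2 * t ^ 2 := by nlinarith [ht.1, h1, sq_nonneg k, sq_nonneg (k*t)]
    have sa : (0:ℝ) < Real.sqrt (1 - t ^ 2) := Real.sqrt_pos.2 ha
    have sb : (0:ℝ) < Real.sqrt (1 - k ^ 2 * t ^ 2) := Real.sqrt_pos.2 hb
    have hA : Real.sqrt (1 - t ^ 2) ^ 2 = 1 - t ^ 2 := Real.sq_sqrt (le_of_lt ha)
    have hB : Real.sqrt (1 - k ^ 2 * t ^ 2) ^ 2 = 1 - k ^ 2 * t ^ 2 := Real.sq_sqrt (le_of_lt hb)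
    unfold Eu Ku Hu
    rw [Real.sqrt_div' _ (le_of_lt ha), Real.sqrt_mul (le_of_lt ha)]
    field_simp
    linear_combination hB

/-- `k²(1-k²) H3 + (1-k²) Ku - Eu = -k² Fd` pointwise -/
lemma KF_identity (hk2 : k ^ 2 < 1) (ht : t ∈ Set.Icc (0:ℝ) 1) :
    k ^ 2 * (1 - k ^ 2) * H3 k t + (1 - k ^ 2) * Ku k t - Eu k t = -(k ^ 2) * Fd k t := by
  rcases eq_or_lt_of_le ht.2 with h1 | h1
  · unfold Eu Ku H3 Fd; rw [h1]; norm_num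
  · have ha : (0:ℝ) < 1 - t ^ 2 := by nlinarith [ht.1, h1]
    have hb : (0:ℝ) < 1 - k ^ 2 * t ^ 2 := by nlinarith [ht.1, h1, sq_nonneg k, sq_nonneg (k*t)]
    have sa : (0:ℝ) < Real.sqrt (1 - t ^ 2) := Real.sqrt_pos.2 ha
    have sb : (0:ℝ) < Real.sqrt (1 - k ^ 2 * t ^ 2) := Real.sqrt_pos.2 hb
    have hA : Real.sqrt (1 - t ^ 2) ^ 2 = 1 - t ^ 2 := Real.sq_sqrt (le_of_lt ha)
    have hB : Real.sqrt (1 - k ^ 2 * t ^ 2) ^ 2 = 1 - k ^ 2 * t ^ 2 := Real.sq_sqrt (le_of_lt hb)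
    unfold Eu Ku H3 Fd
    rw [Real.sqrt_div' _ (le_of_lt ha), Real.sqrt_mul (le_of_lt ha)]
    field_simp
    set A := Real.sqrt (1 - t ^ 2)
    set B := Real.sqrt (1 - k ^ 2 * t ^ 2)
    linear_combination (1 - k^2 - B^2 - (1 - k^2*t^2)) * hB

end pointwise

section paramderiv

variable {k : ℝ}

lemma ball_abs (hk : k ∈ Set.Ioo (0:ℝ) 1) {x : ℝ}
    (hx : x ∈ Metric.ball k ((1 - k)/2)) : |x| < (1 + k)/2 := by
  rw [Metric.mem_ball, Real.dist_eq, abs_lt] at hx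
  rw [abs_lt]
  constructor <;> [linarith [hx.1, hk.1]; linarith [hx.2]]

lemma hasDerivAt_intE (hk : k ∈ Set.Ioo (0:ℝ) 1) :
    HasDerivAt ellipticE (∫ t in (0:ℝ)..1, -(k * Hu k t)) k := by
  have hk2 : k ^ 2 < 1 := by nlinarith [hk.1, hk.2]
  set m : ℝ := (1 + k)/2 with hm
  have hm1 : m < 1 := by rw [hm]; linarith [hk.2]
  have hm0 : 0 < m := by rw [hm]; linarith [hk.1]
  have hm2 : (0:ℝ) < 1 - m ^ 2 := by nlinarith
  set F' : ℝ → ℝ → ℝ := fun x t =>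
    -(x * (t ^ 2 / (Real.sqrt (1 - t ^ 2) * Real.sqrt (1 - x ^ 2 * t ^ 2)))) with hF'
  have key : HasDerivAt (fun x => ∫ t in (0:ℝ)..1, Eu x t) (∫ t in (0:ℝ)..1, F' k t) k := by
    refine (intervalIntegral.hasDerivAt_integral_of_dominated_loc_of_deriv_le
      (F := fun x t => Eu x t) (F' := F')
      (bound := fun t => (1 / Real.sqrt (1 - m ^ 2)) * (1 - t) ^ (-(1/2) : ℝ))
      (s := Metric.ball k ((1 - k)/2)) (Metric.ball_mem_nhds k (show (0:ℝ) < (1 - k)/2 by linarith [hk.2])) ?_ ?_ ?_ ?_ ?_ ?_).2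
    · exact Filter.Eventually.of_forall fun x => meas_Eu
    · exact intEu hk2
    · refine Measurable.aestronglyMeasurable ?_
      rw [hF']; fun_prop
    · -- bound
      filter_upwards [ae_ne_one] with t ht1 htm x hx
      rw [Set.uIoc_of_le (by norm_num : (0:ℝ) ≤ 1)] at htm
      have ht : t ∈ Set.Ioo (0:ℝ) 1 := ⟨htm.1, lt_of_le_of_ne htm.2 ht1⟩
      have hxa := ball_abs hk hx
      have hxt : x ^ 2 * t ^ 2 ≤ m ^ 2 := by
        have h1 : x ^ 2 ≤ m ^ 2 := by
          rw [← sq_abs x]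
          exact le_of_lt (pow_lt_pow_left₀ hxa (abs_nonneg x) (by norm_num))
        have h2 : t ^ 2 ≤ 1 := by nlinarith [ht.1, ht.2]
        nlinarith [sq_nonneg x, mul_le_mul_of_nonneg_left h2 (sq_nonneg x)]
      have hb : (0:ℝ) < 1 - x ^ 2 * t ^ 2 := by nlinarith
      have ha := pos_a ht
      have h1t : (0:ℝ) < 1 - t := by linarith [ht.2]
      rw [hF']
      have e1 : Real.sqrt (1 - m ^ 2) ≤ Real.sqrt (1 - x ^ 2 * t ^ 2) :=
        Real.sqrt_le_sqrt (by linarith)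
      have e2 : Real.sqrt (1 - t) ≤ Real.sqrt (1 - t ^ 2) :=
        Real.sqrt_le_sqrt (by nlinarith [ht.1, ht.2])
      rw [Real.norm_eq_abs, abs_neg, abs_mul, abs_div, rpow_neg_half (le_of_lt h1t)]
      rw [div_mul_div_comm, one_mul]
      have hxm : |x| * |t ^ 2| ≤ 1 := by
        rw [abs_of_nonneg (sq_nonneg t)]
        nlinarith [abs_nonneg x, ht.1, ht.2, sq_nonneg t]
      calc |x| * (|t ^ 2| / |Real.sqrt (1 - t ^ 2) * Real.sqrt (1 - x ^ 2 * t ^ 2)|)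
          = (|x| * |t ^ 2|) / (Real.sqrt (1 - t ^ 2) * Real.sqrt (1 - x ^ 2 * t ^ 2)) := by
            rw [abs_of_nonneg (by positivity : (0:ℝ) ≤ Real.sqrt (1 - t ^ 2) * Real.sqrt (1 - x ^ 2 * t ^ 2))]
            ring
        _ ≤ 1 / (Real.sqrt (1 - m ^ 2) * Real.sqrt (1 - t)) := by
            apply div_le_div₀ (by norm_num) hxm
              (mul_pos (Real.sqrt_pos.2 hm2) (Real.sqrt_pos.2 h1t))
            exact (mul_le_mul e1 e2 (Real.sqrt_nonneg _) (Real.sqrt_nonneg _)).trans_eq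
              (mul_comm _ _)
        _ = 1 / (Real.sqrt (1 - m ^ 2) * Real.sqrt (1 - t)) := rfl
    · exact (integrable_one_sub_rpow (by norm_num)).const_mul _
    · -- differentiability
      filter_upwards [ae_ne_one] with t ht1 htm x hx
      rw [Set.uIoc_of_le (by norm_num : (0:ℝ) ≤ 1)] at htm
      have ht : t ∈ Set.Ioo (0:ℝ) 1 := ⟨htm.1, lt_of_le_of_ne htm.2 ht1⟩
      have hxa := ball_abs hk hx
      have hxt : x ^ 2 * t ^ 2 ≤ m ^ 2 := by
        have h1 : x ^ 2 ≤ m ^ 2 := by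
          rw [← sq_abs x]
          exact le_of_lt (pow_lt_pow_left₀ hxa (abs_nonneg x) (by norm_num))
        have h2 : t ^ 2 ≤ 1 := by nlinarith [ht.1, ht.2]
        nlinarith [sq_nonneg x, mul_le_mul_of_nonneg_left h2 (sq_nonneg x)]
      have hb : (0:ℝ) < 1 - x ^ 2 * t ^ 2 := by nlinarith
      have ha := pos_a ht
      have sa : (0:ℝ) < Real.sqrt (1 - t ^ 2) := Real.sqrt_pos.2 ha
      have sb : (0:ℝ) < Real.sqrt (1 - x ^ 2 * t ^ 2) := Real.sqrt_pos.2 hb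
      have hg : HasDerivAt (fun x : ℝ => (1 - x ^ 2 * t ^ 2)/(1 - t ^ 2))
          ((-(2 * x * t ^ 2))/(1 - t ^ 2)) x := by
        have : HasDerivAt (fun x : ℝ => 1 - x ^ 2 * t ^ 2) (-(2 * x * t ^ 2)) x := by
          simpa [mul_comm, mul_assoc] using ((hasDerivAt_pow 2 x).mul_const (t ^ 2)).const_sub 1
        exact this.div_const _
      have hgpos : (0:ℝ) < (1 - x ^ 2 * t ^ 2)/(1 - t ^ 2) := div_pos hb ha
      have h2 := hg.sqrt (ne_of_gt hgpos)
      unfold Eu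
      refine h2.congr_deriv (Eq.symm ?_)
      rw [hF', Real.sqrt_div' _ (le_of_lt ha)]
      have hA : Real.sqrt (1 - t ^ 2) ^ 2 = 1 - t ^ 2 := Real.sq_sqrt (le_of_lt ha)
      field_simp
      linear_combination (x*t^2) * hA
  have : (fun x => ∫ t in (0:ℝ)..1, Eu x t) = ellipticE := rfl
  rw [this] at key
  apply key.congr_deriv
  apply intervalIntegral.integral_congr
  intro t ht
  rw [hF']
  unfold Hu
  ring

lemma hasDerivAt_intK (hk : k ∈ Set.Ioo (0:ℝ) 1) :
    HasDerivAt ellipticK (∫ t in (0:ℝ)..1, k * H3 k t) k := by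
  have hk2 : k ^ 2 < 1 := by nlinarith [hk.1, hk.2]
  set m : ℝ := (1 + k)/2 with hm
  have hm1 : m < 1 := by rw [hm]; linarith [hk.2]
  have hm0 : 0 < m := by rw [hm]; linarith [hk.1]
  have hm2 : (0:ℝ) < 1 - m ^ 2 := by nlinarith
  set F' : ℝ → ℝ → ℝ := fun x t =>
    x * (t ^ 2 / (Real.sqrt (1 - t ^ 2) * Real.sqrt (1 - x ^ 2 * t ^ 2) ^ 3)) with hF'
  have key : HasDerivAt (fun x => ∫ t in (0:ℝ)..1, Ku x t) (∫ t in (0:ℝ)..1, F' k t) k := by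
    refine (intervalIntegral.hasDerivAt_integral_of_dominated_loc_of_deriv_le
      (F := fun x t => Ku x t) (F' := F')
      (bound := fun t => (1 / Real.sqrt (1 - m ^ 2) ^ 3) * (1 - t) ^ (-(1/2) : ℝ))
      (s := Metric.ball k ((1 - k)/2)) (Metric.ball_mem_nhds k (show (0:ℝ) < (1 - k)/2 by linarith [hk.2])) ?_ ?_ ?_ ?_ ?_ ?_).2
    · exact Filter.Eventually.of_forall fun x => meas_Ku
    · exact intKu hk2
    · refine Measurable.aestronglyMeasurable ?_
      rw [hF']; fun_prop
    · -- bound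
      filter_upwards [ae_ne_one] with t ht1 htm x hx
      rw [Set.uIoc_of_le (by norm_num : (0:ℝ) ≤ 1)] at htm
      have ht : t ∈ Set.Ioo (0:ℝ) 1 := ⟨htm.1, lt_of_le_of_ne htm.2 ht1⟩
      have hxa := ball_abs hk hx
      have hxt : x ^ 2 * t ^ 2 ≤ m ^ 2 := by
        have h1 : x ^ 2 ≤ m ^ 2 := by
          rw [← sq_abs x]
          exact le_of_lt (pow_lt_pow_left₀ hxa (abs_nonneg x) (by norm_num))
        have h2 : t ^ 2 ≤ 1 := by nlinarith [ht.1, ht.2]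
        nlinarith [sq_nonneg x, mul_le_mul_of_nonneg_left h2 (sq_nonneg x)]
      have hb : (0:ℝ) < 1 - x ^ 2 * t ^ 2 := by nlinarith
      have ha := pos_a ht
      have h1t : (0:ℝ) < 1 - t := by linarith [ht.2]
      rw [hF']
      have e1 : Real.sqrt (1 - m ^ 2) ^ 3 ≤ Real.sqrt (1 - x ^ 2 * t ^ 2) ^ 3 := by
        apply pow_le_pow_left₀ (Real.sqrt_nonneg _)
        exact Real.sqrt_le_sqrt (by linarith)
      have e2 : Real.sqrt (1 - t) ≤ Real.sqrt (1 - t ^ 2) :=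
        Real.sqrt_le_sqrt (by nlinarith [ht.1, ht.2])
      rw [Real.norm_eq_abs, abs_mul, abs_div, rpow_neg_half (le_of_lt h1t)]
      rw [div_mul_div_comm, one_mul]
      have hxm : |x| * |t ^ 2| ≤ 1 := by
        rw [abs_of_nonneg (sq_nonneg t)]
        nlinarith [abs_nonneg x, ht.1, ht.2, sq_nonneg t]
      calc |x| * (|t ^ 2| / |Real.sqrt (1 - t ^ 2) * Real.sqrt (1 - x ^ 2 * t ^ 2) ^ 3|)
          = (|x| * |t ^ 2|) / (Real.sqrt (1 - t ^ 2) * Real.sqrt (1 - x ^ 2 * t ^ 2) ^ 3) := by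
            rw [abs_of_nonneg (by positivity : (0:ℝ) ≤ Real.sqrt (1 - t ^ 2) * Real.sqrt (1 - x ^ 2 * t ^ 2) ^ 3)]
            ring
        _ ≤ 1 / (Real.sqrt (1 - m ^ 2) ^ 3 * Real.sqrt (1 - t)) := by
            apply div_le_div₀ (by norm_num) hxm
              (mul_pos (pow_pos (Real.sqrt_pos.2 hm2) 3) (Real.sqrt_pos.2 h1t))
            exact (mul_le_mul e1 e2 (Real.sqrt_nonneg _) (by positivity)).trans_eq
              (mul_comm _ _)
        _ = 1 / (Real.sqrt (1 - m ^ 2) ^ 3 * Real.sqrt (1 - t)) := rfl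
    · exact (integrable_one_sub_rpow (by norm_num)).const_mul _
    · -- differentiability
      filter_upwards [ae_ne_one] with t ht1 htm x hx
      rw [Set.uIoc_of_le (by norm_num : (0:ℝ) ≤ 1)] at htm
      have ht : t ∈ Set.Ioo (0:ℝ) 1 := ⟨htm.1, lt_of_le_of_ne htm.2 ht1⟩
      have hxa := ball_abs hk hx
      have hxt : x ^ 2 * t ^ 2 ≤ m ^ 2 := by
        have h1 : x ^ 2 ≤ m ^ 2 := by
          rw [← sq_abs x]
          exact le_of_lt (pow_lt_pow_left₀ hxa (abs_nonneg x) (by norm_num))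
        have h2 : t ^ 2 ≤ 1 := by nlinarith [ht.1, ht.2]
        nlinarith [sq_nonneg x, mul_le_mul_of_nonneg_left h2 (sq_nonneg x)]
      have hb : (0:ℝ) < 1 - x ^ 2 * t ^ 2 := by nlinarith
      have ha := pos_a ht
      have sa : (0:ℝ) < Real.sqrt (1 - t ^ 2) := Real.sqrt_pos.2 ha
      have sb : (0:ℝ) < Real.sqrt (1 - x ^ 2 * t ^ 2) := Real.sqrt_pos.2 hb
      have hg : HasDerivAt (fun x : ℝ => (1 - t ^ 2) * (1 - x ^ 2 * t ^ 2))
          ((1 - t ^ 2) * (-(2 * x * t ^ 2))) x := by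
        have : HasDerivAt (fun x : ℝ => 1 - x ^ 2 * t ^ 2) (-(2 * x * t ^ 2)) x := by
          simpa [mul_comm, mul_assoc] using ((hasDerivAt_pow 2 x).mul_const (t ^ 2)).const_sub 1
        exact this.const_mul _
      have hgpos : (0:ℝ) < (1 - t ^ 2) * (1 - x ^ 2 * t ^ 2) := mul_pos ha hb
      have h2 := hg.sqrt (ne_of_gt hgpos)
      have h3 := (hasDerivAt_const x (1:ℝ)).div h2 (ne_of_gt (Real.sqrt_pos.2 hgpos))
      unfold Ku
      refine h3.congr_deriv (Eq.symm ?_)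
      rw [hF', Real.sqrt_mul (le_of_lt ha)]
      have hA : Real.sqrt (1 - t ^ 2) ^ 2 = 1 - t ^ 2 := Real.sq_sqrt (le_of_lt ha)
      field_simp
      linear_combination (x*t^2) * hA
  have : (fun x => ∫ t in (0:ℝ)..1, Ku x t) = ellipticK := rfl
  rw [this] at key
  apply key.congr_deriv
  apply intervalIntegral.integral_congr
  intro t ht
  rw [hF']
  unfold H3
  ring

end paramderiv

section derivformulas

variable {k : ℝ}

lemma intHu_eq (hk : k ∈ Set.Ioo (0:ℝ) 1) :
    ∫ t in (0:ℝ)..1, Hu k t = (ellipticK k - ellipticE k) / k ^ 2 := by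
  have hk2 : k ^ 2 < 1 := by nlinarith [hk.1, hk.2]
  have h0 : (k:ℝ) ^ 2 ≠ 0 := pow_ne_zero 2 (ne_of_gt hk.1)
  have h : ellipticE k - ellipticK k = ∫ t in (0:ℝ)..1, (Eu k t - Ku k t) :=
    (intervalIntegral.integral_sub (intEu hk2) (intKu hk2)).symm
  have h2 : ∫ t in (0:ℝ)..1, (Eu k t - Ku k t) = ∫ t in (0:ℝ)..1, -(k ^ 2) * Hu k t := by
    apply intervalIntegral.integral_congr
    intro t ht
    rw [Set.uIcc_of_le (by norm_num : (0:ℝ) ≤ 1)] at ht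
    exact EK_identity hk2 ht
  rw [h2, intervalIntegral.integral_const_mul] at h
  have hkne : k ≠ 0 := ne_of_gt hk.1
  field_simp at h ⊢
  linarith

lemma hasDerivAt_E (hk : k ∈ Set.Ioo (0:ℝ) 1) :
    HasDerivAt ellipticE ((ellipticE k - ellipticK k) / k) k := by
  have h := hasDerivAt_intE hk
  have hkne : k ≠ 0 := ne_of_gt hk.1
  convert h using 1
  have e1 : ∫ t in (0:ℝ)..1, -(k * Hu k t) = -(k * ∫ t in (0:ℝ)..1, Hu k t) := by
    rw [← intervalIntegral.integral_const_mul, ← intervalIntegral.integral_neg]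
  rw [e1, intHu_eq hk]
  field_simp
  ring

lemma intH3_eq (hk : k ∈ Set.Ioo (0:ℝ) 1) :
    ∫ t in (0:ℝ)..1, H3 k t
      = (ellipticE k - (1 - k ^ 2) * ellipticK k) / (k ^ 2 * (1 - k ^ 2)) := by
  have hk2 : k ^ 2 < 1 := by nlinarith [hk.1, hk.2]
  have hkne : k ≠ 0 := ne_of_gt hk.1
  have hk2' : (0:ℝ) < 1 - k ^ 2 := by linarith
  have e1 : ∫ t in (0:ℝ)..1, (k ^ 2 * (1 - k ^ 2) * H3 k t + (1 - k ^ 2) * Ku k t - Eu k t)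
      = k ^ 2 * (1 - k ^ 2) * (∫ t in (0:ℝ)..1, H3 k t)
        + (1 - k ^ 2) * ellipticK k - ellipticE k := by
    rw [intervalIntegral.integral_sub (((intH3 hk2).const_mul _).add ((intKu hk2).const_mul _))
        (intEu hk2),
      intervalIntegral.integral_add ((intH3 hk2).const_mul _) ((intKu hk2).const_mul _),
      intervalIntegral.integral_const_mul, intervalIntegral.integral_const_mul,
      ellipticK_eq, ellipticE_eq]
  have e2 : ∫ t in (0:ℝ)..1, (k ^ 2 * (1 - k ^ 2) * H3 k t + (1 - k ^ 2) * Ku k t - Eu k t)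
      = 0 := by
    have e3 : ∫ t in (0:ℝ)..1, (k ^ 2 * (1 - k ^ 2) * H3 k t + (1 - k ^ 2) * Ku k t - Eu k t)
        = ∫ t in (0:ℝ)..1, -(k ^ 2) * Fd k t := by
      apply intervalIntegral.integral_congr
      intro t ht
      rw [Set.uIcc_of_le (by norm_num : (0:ℝ) ≤ 1)] at ht
      exact KF_identity hk2 ht
    rw [e3, intervalIntegral.integral_const_mul, integral_Fd hk2, mul_zero]
  rw [e2] at e1
  field_simp
  linarith

lemma hasDerivAt_K (hk : k ∈ Set.Ioo (0:ℝ) 1) :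
    HasDerivAt ellipticK
      ((ellipticE k - (1 - k ^ 2) * ellipticK k) / (k * (1 - k ^ 2))) k := by
  have h := hasDerivAt_intK hk
  have hkne : k ≠ 0 := ne_of_gt hk.1
  have hk2 : k ^ 2 < 1 := by nlinarith [hk.1, hk.2]
  have hk2' : (0:ℝ) < 1 - k ^ 2 := by linarith
  convert h using 1
  rw [intervalIntegral.integral_const_mul, intH3_eq hk]
  field_simp

end derivformulas

section Lderiv

variable {k : ℝ}

/-- the Legendre combination -/
noncomputable def Lfun (x : ℝ) : ℝ :=
  ellipticE x * ellipticK (Real.sqrt (1 - x ^ 2)) +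
    ellipticE (Real.sqrt (1 - x ^ 2)) * ellipticK x -
    ellipticK x * ellipticK (Real.sqrt (1 - x ^ 2))

lemma comp_mem (hk : k ∈ Set.Ioo (0:ℝ) 1) : Real.sqrt (1 - k ^ 2) ∈ Set.Ioo (0:ℝ) 1 := by
  have hk2 : (0:ℝ) < 1 - k ^ 2 := by nlinarith [hk.1, hk.2]
  refine ⟨Real.sqrt_pos.2 hk2, ?_⟩
  have : Real.sqrt (1 - k ^ 2) < Real.sqrt 1 :=
    Real.sqrt_lt_sqrt (le_of_lt hk2) (by nlinarith [hk.1])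
  simpa using this

lemma hasDerivAt_comp_sqrt (hk : k ∈ Set.Ioo (0:ℝ) 1) :
    HasDerivAt (fun x : ℝ => Real.sqrt (1 - x ^ 2)) (-k / Real.sqrt (1 - k ^ 2)) k := by
  have hk2 : (0:ℝ) < 1 - k ^ 2 := by nlinarith [hk.1, hk.2]
  have h : HasDerivAt (fun x : ℝ => 1 - x ^ 2) (-(2 * k)) k := by
    simpa using (hasDerivAt_pow 2 k).const_sub 1
  have h2 := h.sqrt (ne_of_gt hk2)
  convert h2 using 1
  have hs : (0:ℝ) < Real.sqrt (1 - k ^ 2) := Real.sqrt_pos.2 hk2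
  field_simp

lemma hasDerivAt_Lfun (hk : k ∈ Set.Ioo (0:ℝ) 1) : HasDerivAt Lfun 0 k := by
  have hc := comp_mem hk
  have hk2 : (0:ℝ) < 1 - k ^ 2 := by nlinarith [hk.1, hk.2]
  have hg := hasDerivAt_comp_sqrt hk
  have hEk := hasDerivAt_E hk
  have hKk := hasDerivAt_K hk
  have hEc : HasDerivAt (fun x : ℝ => ellipticE (Real.sqrt (1 - x ^ 2)))
      ((ellipticE (Real.sqrt (1 - k ^ 2)) - ellipticK (Real.sqrt (1 - k ^ 2))) /
          Real.sqrt (1 - k ^ 2) * (-k / Real.sqrt (1 - k ^ 2))) k :=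
    ((hasDerivAt_E hc).comp k hg :)
  have hKc : HasDerivAt (fun x : ℝ => ellipticK (Real.sqrt (1 - x ^ 2)))
      ((ellipticE (Real.sqrt (1 - k ^ 2)) -
          (1 - Real.sqrt (1 - k ^ 2) ^ 2) * ellipticK (Real.sqrt (1 - k ^ 2))) /
          (Real.sqrt (1 - k ^ 2) * (1 - Real.sqrt (1 - k ^ 2) ^ 2)) *
          (-k / Real.sqrt (1 - k ^ 2))) k :=
    ((hasDerivAt_K hc).comp k hg :)
  have h := ((hEk.mul hKc).add (hEc.mul hKk)).sub (hKk.mul hKc)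
  have hc2 : Real.sqrt (1 - k ^ 2) ^ 2 = 1 - k ^ 2 := Real.sq_sqrt (le_of_lt hk2)
  have h1 : 1 - Real.sqrt (1 - k ^ 2) ^ 2 = k ^ 2 := by rw [hc2]; ring
  rw [h1] at h
  have hL : Lfun = fun x => ellipticE x * ellipticK (Real.sqrt (1 - x ^ 2)) +
      ellipticE (Real.sqrt (1 - x ^ 2)) * ellipticK x -
      ellipticK x * ellipticK (Real.sqrt (1 - x ^ 2)) := rfl
  rw [hL]
  refine h.congr_deriv (Eq.symm ?_)
  set c := Real.sqrt (1 - k ^ 2) with hcdef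
  set EK := ellipticE k
  set KK := ellipticK k
  set EC := ellipticE c
  set KC := ellipticK c
  have hkne : k ≠ 0 := ne_of_gt hk.1
  have hcne : c ≠ 0 := ne_of_gt hc.1
  rw [← hc2]
  field_simp
  linear_combination (KK*EC - EK*KC) * hc2

end Lderiv

section final

lemma Lfun_mono_eq {a b : ℝ} (ha : a ∈ Set.Ioo (0:ℝ) 1) (hb : b ∈ Set.Ioo (0:ℝ) 1)
    (hab : a < b) : Lfun a = Lfun b := by
  have hsub : Set.Icc a b ⊆ Set.Ioo (0:ℝ) 1 := fun x hx => ⟨lt_of_lt_of_le ha.1 hx.1,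
    lt_of_le_of_lt hx.2 hb.2⟩
  have hcont : ContinuousOn Lfun (Set.Icc a b) := fun x hx =>
    ((hasDerivAt_Lfun (hsub hx)).continuousAt).continuousWithinAt
  obtain ⟨c, hc, hc2⟩ := exists_hasDerivAt_eq_slope Lfun (fun _ => (0:ℝ)) hab hcont
    (fun x hx => hasDerivAt_Lfun (hsub ⟨le_of_lt hx.1, le_of_lt hx.2⟩))
  have : Lfun b - Lfun a = 0 := by
    rw [eq_comm, div_eq_zero_iff] at hc2
    rcases hc2 with h | h
    · exact h
    · exfalso; linarith [sub_pos.2 hab]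
  linarith

lemma Lfun_const {a b : ℝ} (ha : a ∈ Set.Ioo (0:ℝ) 1) (hb : b ∈ Set.Ioo (0:ℝ) 1) :
    Lfun a = Lfun b := by
  rcases lt_trichotomy a b with h | h | h
  · exact Lfun_mono_eq ha hb h
  · rw [h]
  · exact (Lfun_mono_eq hb ha h).symm

lemma EK_diff_bound {x : ℝ} (hx : x ∈ Set.Ioo (0:ℝ) (1/2)) :
    |ellipticE x - ellipticK x| ≤ 4 * x ^ 2 := by
  have hx1 : x ∈ Set.Ioo (0:ℝ) 1 := ⟨hx.1, by linarith [hx.2]⟩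
  have hk2 : x ^ 2 < 1 := by nlinarith [hx1.1, hx1.2]
  have hx0 : (x:ℝ) ^ 2 ≠ 0 := pow_ne_zero 2 (ne_of_gt hx.1)
  have hq : ellipticE x - ellipticK x = -(x ^ 2) * ∫ t in (0:ℝ)..1, Hu x t := by
    rw [intHu_eq hx1]
    have hxne : x ≠ 0 := ne_of_gt hx.1
    field_simp
    ring
  rw [hq, abs_mul, abs_neg, abs_of_nonneg (sq_nonneg x)]
  have hb : ‖∫ t in (0:ℝ)..1, Hu x t‖ ≤ |∫ t in (0:ℝ)..1, 2 * (1 - t) ^ (-(1/2) : ℝ)| := by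
    refine le_trans (intervalIntegral.norm_integral_le_of_norm_le (by norm_num) ?_
      ((integrable_one_sub_rpow (by norm_num)).const_mul _)) (le_abs_self _)
    rw [← Set.uIoc_of_le (by norm_num : (0:ℝ) ≤ 1)]
    filter_upwards [ae_ne_one] with t ht1 htm
    rw [Set.uIoc_of_le (by norm_num : (0:ℝ) ≤ 1)] at htm
    have ht : t ∈ Set.Ioo (0:ℝ) 1 := ⟨htm.1, lt_of_le_of_ne htm.2 ht1⟩
    refine le_trans (bound_Hu hk2 ht) ?_
    have h1t : (0:ℝ) ≤ 1 - t := by linarith [ht.2]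
    have hrp : (0:ℝ) ≤ (1 - t) ^ (-(1/2):ℝ) := Real.rpow_nonneg h1t _
    apply mul_le_mul_of_nonneg_right ?_ hrp
    have h12 : (1:ℝ)/2 ≤ Real.sqrt (1 - x ^ 2) := by
      rw [show (1:ℝ)/2 = Real.sqrt ((1:ℝ)/4) by
        rw [show (1:ℝ)/4 = ((1:ℝ)/2)^2 by norm_num, Real.sqrt_sq (by norm_num)]]
      exact Real.sqrt_le_sqrt (by nlinarith [hx.1, hx.2])
    calc 1 / Real.sqrt (1 - x ^ 2) ≤ 1 / ((1:ℝ)/2) :=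
          one_div_le_one_div_of_le (by norm_num) h12
      _ = 2 := by norm_num
  have hv : ∫ t in (0:ℝ)..1, 2 * (1 - t) ^ (-(1/2) : ℝ) = 4 := by
    rw [intervalIntegral.integral_const_mul,
      integral_one_sub_rpow (by norm_num) (by norm_num)]
    norm_num
  rw [hv, Real.norm_eq_abs] at hb
  have : |(4:ℝ)| = 4 := by norm_num
  rw [this] at hb
  nlinarith [abs_nonneg (∫ t in (0:ℝ)..1, Hu x t), sq_nonneg x, hb]

lemma K_nonneg (k : ℝ) : 0 ≤ ellipticK k := by
  rw [ellipticK_eq]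
  apply intervalIntegral.integral_nonneg (by norm_num)
  intro u _
  unfold Ku
  positivity

lemma K_comp_bound {x : ℝ} (hx : x ∈ Set.Ioo (0:ℝ) 1) :
    ellipticK (Real.sqrt (1 - x ^ 2)) ≤ (1 / Real.sqrt x) * 4 := by
  have hm := comp_mem hx
  have hm2lt : Real.sqrt (1 - x ^ 2) ^ 2 < 1 := by nlinarith [hm.1, hm.2]
  have hmsq : Real.sqrt (1 - x ^ 2) ^ 2 = 1 - x ^ 2 :=
    Real.sq_sqrt (by nlinarith [hx.1, hx.2])
  have hsx : (0:ℝ) < Real.sqrt x := Real.sqrt_pos.2 hx.1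
  rw [ellipticK_eq]
  have hint : ∫ t in (0:ℝ)..1, (1 / Real.sqrt x) * (1 - t) ^ (-(3/4) : ℝ)
      = (1 / Real.sqrt x) * 4 := by
    rw [intervalIntegral.integral_const_mul,
      integral_one_sub_rpow (by norm_num) (by norm_num)]
    norm_num
  rw [← hint]
  apply intervalIntegral.integral_mono_on (by norm_num) (intKu hm2lt)
    ((integrable_one_sub_rpow (by norm_num)).const_mul _)
  intro t ht
  rcases eq_or_lt_of_le ht.2 with h1 | h1
  · -- t = 1
    unfold Ku
    rw [h1]
    norm_num [Real.zero_rpow (show (-(3/4):ℝ) ≠ 0 by norm_num)]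
  · have h0t : (0:ℝ) ≤ t := ht.1
    have h1t : (0:ℝ) < 1 - t := by linarith
    have ha : (0:ℝ) < 1 - t ^ 2 := by nlinarith
    have hx2pos : (0:ℝ) < 1 - x ^ 2 := by nlinarith [hx.1, hx.2]
    have hb : (0:ℝ) < 1 - Real.sqrt (1 - x ^ 2) ^ 2 * t ^ 2 := by
      rw [hmsq]; nlinarith [sq_nonneg (x*t), sq_nonneg t, mul_nonneg (le_of_lt hx2pos) (sq_nonneg t)]
    set s := Real.sqrt (1 - t) with hs
    have hs0 : 0 < s := Real.sqrt_pos.2 h1t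
    have hs2 : s ^ 2 = 1 - t := Real.sq_sqrt (le_of_lt h1t)
    have hs3 : s ^ 3 = (1 - t) * s := by
      rw [pow_succ, hs2]
    unfold Ku
    rw [rpow_neg_3q (le_of_lt h1t), ← hs, div_mul_div_comm, one_mul,
      ← Real.sqrt_mul (le_of_lt hx.1)]
    apply one_div_sqrt_le (mul_pos hx.1 (pow_pos hs0 3))
    have hu2 : x ^ 2 ≤ 1 - Real.sqrt (1 - x ^ 2) ^ 2 * t ^ 2 := by
      rw [hmsq]
      nlinarith [mul_nonneg (le_of_lt hx2pos) (le_of_lt ha)]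
    have hus : s ^ 2 ≤ 1 - Real.sqrt (1 - x ^ 2) ^ 2 * t ^ 2 := by
      rw [hmsq, hs2]
      nlinarith [sq_nonneg (x*t), sq_nonneg t, h0t]
    have e : x * s ≤ 1 - Real.sqrt (1 - x ^ 2) ^ 2 * t ^ 2 := by
      nlinarith [sq_nonneg (x - s), hu2, hus]
    calc x * s ^ 3 = (1 - t) * (x * s) := by rw [hs3]; ring
      _ ≤ (1 - t) * (1 - Real.sqrt (1 - x ^ 2) ^ 2 * t ^ 2) :=
          mul_le_mul_of_nonneg_left e (le_of_lt h1t)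
      _ ≤ (1 - t ^ 2) * (1 - Real.sqrt (1 - x ^ 2) ^ 2 * t ^ 2) :=
          mul_le_mul_of_nonneg_right (by nlinarith) (le_of_lt hb)

lemma inv_sqrt_le_two {x : ℝ} (hx : x ∈ Set.Ioo (0:ℝ) (1/2)) :
    1 / Real.sqrt (1 - x ^ 2) ≤ 2 := by
  have h12 : (1:ℝ)/2 ≤ Real.sqrt (1 - x ^ 2) := by
    rw [show (1:ℝ)/2 = Real.sqrt ((1:ℝ)/4) by
      rw [show (1:ℝ)/4 = ((1:ℝ)/2)^2 by norm_num, Real.sqrt_sq (by norm_num)]]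
    exact Real.sqrt_le_sqrt (by nlinarith [hx.1, hx.2])
  calc 1 / Real.sqrt (1 - x ^ 2) ≤ 1 / ((1:ℝ)/2) :=
        one_div_le_one_div_of_le (by norm_num) h12
    _ = 2 := by norm_num

open Filter in
lemma tendsto_K_low : Tendsto ellipticK (nhdsWithin 0 (Set.Ioi (0:ℝ))) (nhds (π/2)) := by
  have h0 : ellipticK = fun x => ∫ t in (0:ℝ)..1, Ku x t := rfl
  rw [h0, ← integral_Ku_zero]
  apply intervalIntegral.tendsto_integral_filter_of_dominated_convergence
    (bound := fun t => 2 * (1 - t) ^ (-(1/2) : ℝ))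
  · exact Filter.Eventually.of_forall fun x => meas_Ku
  · filter_upwards [Ioo_mem_nhdsGT_of_mem
      (Set.mem_Ico.2 ⟨le_refl (0:ℝ), by norm_num⟩ : (0:ℝ) ∈ Set.Ico (0:ℝ) (1/2:ℝ))] with x hx
    filter_upwards [ae_ne_one] with t ht1 htm
    rw [Set.uIoc_of_le (by norm_num : (0:ℝ) ≤ 1)] at htm
    have ht : t ∈ Set.Ioo (0:ℝ) 1 := ⟨htm.1, lt_of_le_of_ne htm.2 ht1⟩
    have hk2 : x ^ 2 < 1 := by nlinarith [hx.1, hx.2]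
    refine le_trans (bound_Ku hk2 ht) ?_
    have hrp : (0:ℝ) ≤ (1 - t) ^ (-(1/2):ℝ) := Real.rpow_nonneg (by linarith [ht.2]) _
    exact mul_le_mul_of_nonneg_right (inv_sqrt_le_two hx) hrp
  · exact (integrable_one_sub_rpow (by norm_num)).const_mul _
  · filter_upwards [ae_ne_one] with t ht1 htm
    rw [Set.uIoc_of_le (by norm_num : (0:ℝ) ≤ 1)] at htm
    have ht : t ∈ Set.Ioo (0:ℝ) 1 := ⟨htm.1, lt_of_le_of_ne htm.2 ht1⟩
    have ha := pos_a ht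
    have hcont : ContinuousAt (fun x : ℝ => Ku x t) 0 := by
      unfold Ku
      apply ContinuousAt.div continuousAt_const
      · exact (Real.continuous_sqrt.comp (by continuity)).continuousAt
      · apply ne_of_gt
        apply Real.sqrt_pos.2
        nlinarith [ht.1, ht.2, sq_nonneg t]
    exact hcont.tendsto.mono_left nhdsWithin_le_nhds

open Filter in
lemma tendsto_Ec_low :
    Tendsto (fun x => ellipticE (Real.sqrt (1 - x ^ 2)))
      (nhdsWithin 0 (Set.Ioi (0:ℝ))) (nhds 1) := by
  have h0 : (fun x : ℝ => ellipticE (Real.sqrt (1 - x ^ 2)))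
      = fun x => ∫ t in (0:ℝ)..1, Eu (Real.sqrt (1 - x ^ 2)) t := rfl
  rw [h0]
  have main : Tendsto (fun x => ∫ t in (0:ℝ)..1, Eu (Real.sqrt (1 - x ^ 2)) t)
      (nhdsWithin 0 (Set.Ioi (0:ℝ))) (nhds (∫ t in (0:ℝ)..1, (1:ℝ))) := by
    apply intervalIntegral.tendsto_integral_filter_of_dominated_convergence
      (bound := fun t => 1 * (1 - t) ^ (-(1/2) : ℝ))
    · exact Filter.Eventually.of_forall fun x => meas_Eu
    · filter_upwards [Ioo_mem_nhdsGT_of_mem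
        (Set.mem_Ico.2 ⟨le_refl (0:ℝ), by norm_num⟩ : (0:ℝ) ∈ Set.Ico (0:ℝ) (1:ℝ))] with x hx
      filter_upwards [ae_ne_one] with t ht1 htm
      rw [Set.uIoc_of_le (by norm_num : (0:ℝ) ≤ 1)] at htm
      have ht : t ∈ Set.Ioo (0:ℝ) 1 := ⟨htm.1, lt_of_le_of_ne htm.2 ht1⟩
      have hm := comp_mem hx
      have hm2 : Real.sqrt (1 - x ^ 2) ^ 2 < 1 := by nlinarith [hm.1, hm.2]
      exact bound_Eu hm2 ht
    · exact (integrable_one_sub_rpow (by norm_num)).const_mul _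
    · filter_upwards [ae_ne_one] with t ht1 htm
      rw [Set.uIoc_of_le (by norm_num : (0:ℝ) ≤ 1)] at htm
      have ht : t ∈ Set.Ioo (0:ℝ) 1 := ⟨htm.1, lt_of_le_of_ne htm.2 ht1⟩
      have ha := pos_a ht
      have hcont : ContinuousAt (fun x : ℝ => Eu (Real.sqrt (1 - x ^ 2)) t) 0 := by
        unfold Eu
        apply Real.continuous_sqrt.continuousAt.comp
        apply ContinuousAt.div ?_ continuousAt_const (ne_of_gt ha)
        apply ContinuousAt.sub continuousAt_const
        exact (((Real.continuous_sqrt.comp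
          (continuous_const.sub (continuous_pow 2))).pow 2).mul continuous_const).continuousAt
      have hval : Eu (Real.sqrt (1 - (0:ℝ) ^ 2)) t = 1 := by
        unfold Eu
        norm_num
        exact ne_of_gt ha
      have := hcont.tendsto.mono_left
        (nhdsWithin_le_nhds : nhdsWithin 0 (Set.Ioi (0:ℝ)) ≤ nhds 0)
      rwa [hval] at this
  simpa using main

open Filter in
lemma tendsto_prod_low :
    Tendsto (fun x => (ellipticE x - ellipticK x) * ellipticK (Real.sqrt (1 - x ^ 2)))
      (nhdsWithin 0 (Set.Ioi (0:ℝ))) (nhds 0) := by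
  refine squeeze_zero_norm' (a := fun x => 16 * (x * Real.sqrt x)) ?_ ?_
  · filter_upwards [Ioo_mem_nhdsGT_of_mem
      (Set.mem_Ico.2 ⟨le_refl (0:ℝ), by norm_num⟩ : (0:ℝ) ∈ Set.Ico (0:ℝ) (1/2:ℝ))] with x hx
    have hx1 : x ∈ Set.Ioo (0:ℝ) 1 := ⟨hx.1, by linarith [hx.2]⟩
    have hsx : (0:ℝ) < Real.sqrt x := Real.sqrt_pos.2 hx.1
    rw [Real.norm_eq_abs, abs_mul, abs_of_nonneg (K_nonneg _)]
    calc |ellipticE x - ellipticK x| * ellipticK (Real.sqrt (1 - x ^ 2))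
        ≤ (4 * x ^ 2) * ((1 / Real.sqrt x) * 4) :=
          mul_le_mul (EK_diff_bound hx) (K_comp_bound hx1) (K_nonneg _) (by positivity)
      _ = 16 * (x * (x / Real.sqrt x)) := by ring
      _ = 16 * (x * Real.sqrt x) := by rw [Real.div_sqrt]
  · have hc : Continuous (fun x : ℝ => 16 * (x * Real.sqrt x)) :=
      continuous_const.mul (continuous_id.mul Real.continuous_sqrt)
    have := hc.tendsto' 0 0 (by simp)
    exact this.mono_left nhdsWithin_le_nhds

end final

end LegendreAux

/-- The Legendre relation for complete elliptic integrals. -/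
theorem legendre_relation (k : ℝ) (hk : k ∈ Set.Ioo (0:ℝ) 1) :
    ellipticE k * ellipticK (Real.sqrt (1 - k ^ 2)) +
      ellipticE (Real.sqrt (1 - k ^ 2)) * ellipticK k -
      ellipticK k * ellipticK (Real.sqrt (1 - k ^ 2)) = π / 2 := by
  open LegendreAux Filter in
  show LegendreAux.Lfun k = π / 2
  have h2 : Tendsto LegendreAux.Lfun (nhdsWithin 0 (Set.Ioi (0:ℝ)))
      (nhds (LegendreAux.Lfun k)) := by
    refine Filter.Tendsto.congr' ?_ tendsto_const_nhds
    filter_upwards [Ioo_mem_nhdsGT_of_mem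
      (Set.mem_Ico.2 ⟨le_refl (0:ℝ), zero_lt_one⟩ : (0:ℝ) ∈ Set.Ico (0:ℝ) (1:ℝ))] with x hx
    exact LegendreAux.Lfun_const hk hx
  have h1 : Tendsto LegendreAux.Lfun (nhdsWithin 0 (Set.Ioi (0:ℝ))) (nhds (π/2)) := by
    have heq : LegendreAux.Lfun = fun x =>
        (ellipticE x - ellipticK x) * ellipticK (Real.sqrt (1 - x ^ 2)) +
        ellipticE (Real.sqrt (1 - x ^ 2)) * ellipticK x := by
      funext x
      show ellipticE x * ellipticK (Real.sqrt (1 - x ^ 2)) +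
        ellipticE (Real.sqrt (1 - x ^ 2)) * ellipticK x -
        ellipticK x * ellipticK (Real.sqrt (1 - x ^ 2)) = _
      ring
    rw [heq]
    have := LegendreAux.tendsto_prod_low.add
      (LegendreAux.tendsto_Ec_low.mul LegendreAux.tendsto_K_low)
    simpa using this
  exact tendsto_nhds_unique h2 h1
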